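/- For ξ ∈ ℝ with |ξ| > k_s, define γ_p = i√(ξ² - k_p²), γ_s = i√(ξ² - k_s²), and let M(ξ) = (i/(ξ² + γ_pγ_s)) [[ω²γ_p, -ξω² + ξμ(ξ² + γ_pγ_s)], [ξω² - ξμ(ξ² + γ_pγ_s), ω²γ_s]]. Then -Re M(ξ) := -(M + M̄ᵀ)/2 is a positive definite Hermitian 2×2 matrix. -/

import Mathlib

open Complex Matrix
open scoped ComplexOrder
set_option maxHeartbeats 1000000

lemma posdef_fin_two (p q er : ℝ) (hp : 0 < p) (hq : 0 < q) (hpq : er ^ 2 < p * q) :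
    (!![(p : ℂ), -(I * er); I * er, (q : ℂ)]).PosDef := by
  constructor
  · ext i j
    fin_cases i <;> fin_cases j <;>
      simp [Matrix.conjTranspose_apply, Complex.ext_iff]
  · intro x hx
    have key : ∀ u v : ℂ, (u ≠ 0 ∨ v ≠ 0) →
        (0 : ℂ) < (starRingEnd ℂ) u * ((p : ℂ) * u + -(I * er) * v) +
          (starRingEnd ℂ) v * (I * er * u + (q : ℂ) * v) := by
      intro u v huv
      have hz : (starRingEnd ℂ) u * ((p : ℂ) * u + -(I * er) * v) +
          (starRingEnd ℂ) v * (I * er * u + (q : ℂ) * v)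
          = ((p * Complex.normSq u + q * Complex.normSq v
              - 2 * er * ((starRingEnd ℂ) v * u).im : ℝ) : ℂ) := by
        have h1 : (starRingEnd ℂ) u * u = (Complex.normSq u : ℂ) := by
          rw [mul_comm, Complex.mul_conj]
        have h2 : (starRingEnd ℂ) v * v = (Complex.normSq v : ℂ) := by
          rw [mul_comm, Complex.mul_conj]
        have h3 : ((starRingEnd ℂ) v * u) - (starRingEnd ℂ) ((starRingEnd ℂ) v * u)
            = (2 * ((starRingEnd ℂ) v * u).im : ℝ) * I := Complex.sub_conj _
        have h4 : (starRingEnd ℂ) ((starRingEnd ℂ) v * u) = (starRingEnd ℂ) u * v := by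
          simp [mul_comm]
        have hI : (I : ℂ) ^ 2 = -1 := Complex.I_sq
        push_cast [Complex.ofReal_mul] at h3 ⊢
        linear_combination (p : ℂ) * h1 + (q : ℂ) * h2 + (I * (er : ℂ)) * h3
          + (I * (er : ℂ)) * h4
          + (2 * ((((starRingEnd ℂ) v * u).im : ℝ) : ℂ) * (er : ℂ)) * hI
      rw [hz, Complex.zero_lt_real]
      obtain ⟨s, hs⟩ : ∃ s, ‖u‖ = s := ⟨_, rfl⟩
      obtain ⟨t, ht⟩ : ∃ t, ‖v‖ = t := ⟨_, rfl⟩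
      have hns : Complex.normSq u = s ^ 2 := by rw [← hs, Complex.sq_norm]
      have hnt : Complex.normSq v = t ^ 2 := by rw [← ht, Complex.sq_norm]
      have him : |((starRingEnd ℂ) v * u).im| ≤ t * s := by
        calc |((starRingEnd ℂ) v * u).im| ≤ ‖(starRingEnd ℂ) v * u‖ :=
              Complex.abs_im_le_norm _
          _ = t * s := by rw [norm_mul, Complex.norm_conj, hs, ht]
      have hbound : 2 * er * ((starRingEnd ℂ) v * u).im ≤ 2 * |er| * (t * s) := by
        calc 2 * er * ((starRingEnd ℂ) v * u).im
            ≤ |2 * er * ((starRingEnd ℂ) v * u).im| := le_abs_self _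
          _ = 2 * |er| * |((starRingEnd ℂ) v * u).im| := by
              rw [abs_mul, abs_mul]; simp
          _ ≤ 2 * |er| * (t * s) := by
              apply mul_le_mul_of_nonneg_left him; positivity
      rw [hns, hnt]
      have hst : 0 < s ∨ 0 < t := by
        rcases huv with h | h
        · exact Or.inl (hs ▸ norm_pos_iff.mpr h)
        · exact Or.inr (ht ▸ norm_pos_iff.mpr h)
      have hs0 : 0 ≤ s := hs ▸ norm_nonneg u
      have ht0 : 0 ≤ t := ht ▸ norm_nonneg v
      have habs2 : |er| ^ 2 < p * q := by rwa [_root_.sq_abs]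
      have hfinal : 2 * |er| * (t * s) < p * s ^ 2 + q * t ^ 2 := by
        rcases hst with h | h
        · by_cases h0 : t = 0
          · rw [h0]; nlinarith [mul_pos hp (mul_pos h h)]
          · have htpos : 0 < t := lt_of_le_of_ne ht0 (Ne.symm h0)
            have h5 : 0 < (p * q - |er| ^ 2) * t ^ 2 := by
              apply mul_pos (by linarith) (by positivity)
            nlinarith [sq_nonneg (p * s - |er| * t), h5, hp]
        · by_cases h0 : s = 0
          · rw [h0]; nlinarith [mul_pos hq (mul_pos h h)]
          · have hspos : 0 < s := lt_of_le_of_ne hs0 (Ne.symm h0)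
            have h5 : 0 < (p * q - |er| ^ 2) * s ^ 2 := by
              apply mul_pos (by linarith) (by positivity)
            nlinarith [sq_nonneg (q * t - |er| * s), h5, hq]
      linarith
    have hx01 : x 0 ≠ 0 ∨ x 1 ≠ 0 := by
      by_contra h
      push_neg at h
      apply hx
      ext i
      fin_cases i
      · exact h.1
      · exact h.2
    have := key (x 0) (x 1) hx01
    simp [Finsupp.sum_fintype, dotProduct, Matrix.mulVec, Fin.sum_univ_two, mul_comm, mul_assoc, mul_left_comm]
    convert this using 1
    ring

lemma keylem (kp ks ξ a b : ℝ) (hkp0 : 0 < kp) (hks0 : 0 < ks)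
    (hkpks : kp^2 < ks^2) (h2kp : 2*kp^2 < ks^2) (hξ2 : ks^2 < ξ^2)
    (ha2 : a^2 = ξ^2 - kp^2) (hb2 : b^2 = ξ^2 - ks^2) (ha0 : 0 < a) (hb0 : 0 < b) :
    ξ ^ 2 * (b * (a - b) ^ 2) < (ks ^ 2) ^ 2 * a := by
  have hab : b < a := by nlinarith [ha2, hb2]
  have hfac : (a - b) * (a + b) = ks ^ 2 - kp ^ 2 := by linear_combination ha2 - hb2
  have h2a : ks ^ 2 < 2 * a ^ 2 := by nlinarith [ha2]
  have hA : ξ ^ 2 * b < a * (a + b) ^ 2 := by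
    nlinarith [mul_pos (sub_pos.mpr hab) (show (0:ℝ) < a^2 + a*b + b^2 by positivity),
      mul_pos hb0 (show (0:ℝ) < 2*a^2 - ks^2 by linarith),
      mul_nonneg ha0.le (sq_nonneg b), hb2]
  have hξ0 : 0 < ξ ^ 2 := by nlinarith
  have hkp2pos : 0 < kp ^ 2 := by positivity
  have h6 : ξ ^ 2 * (b * (a - b) ^ 2) * (a + b) ^ 2 = ξ ^ 2 * b * (ks ^ 2 - kp ^ 2) ^ 2 := by
    linear_combination (ξ ^ 2 * b * ((a - b) * (a + b) + (ks ^ 2 - kp ^ 2))) * hfac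
  have s1 : ξ ^ 2 * b * (ks ^ 2 - kp ^ 2) ^ 2 < ξ ^ 2 * b * (ks ^ 2) ^ 2 := by
    apply mul_lt_mul_of_pos_left _ (by positivity)
    nlinarith [mul_pos hkp2pos (show (0:ℝ) < 2 * ks ^ 2 - kp ^ 2 by linarith)]
  have s2 := mul_lt_mul_of_pos_left hA (show (0:ℝ) < (ks ^ 2) ^ 2 by positivity)
  have h8 : ξ ^ 2 * (b * (a - b) ^ 2) * (a + b) ^ 2 < (ks ^ 2) ^ 2 * a * (a + b) ^ 2 := by
    rw [h6]; nlinarith [s1, s2]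
  exact lt_of_mul_lt_mul_right h8 (sq_nonneg (a + b))

lemma dlem (kp ks ξ a b : ℝ) (hkp0 : 0 < kp) (hks0 : 0 < ks)
    (hkpks : kp^2 < ks^2) (hξ2 : ks^2 < ξ^2)
    (ha2 : a^2 = ξ^2 - kp^2) (hb2 : b^2 = ξ^2 - ks^2) (ha0 : 0 < a) (hb0 : 0 < b) :
    0 < ξ ^ 2 - a * b := by
  have hξ0 : 0 < ξ ^ 2 := by nlinarith
  have hab2 : (a*b)^2 < (ξ^2)^2 := by
    rw [mul_pow, ha2, hb2]
    nlinarith [mul_pos (mul_pos hkp0 hkp0) (mul_pos hks0 hks0), hξ2, hkpks,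
      mul_pos hkp0 hkp0, mul_pos hks0 hks0]
  nlinarith [hab2, mul_pos ha0 hb0, hξ0]


/-- for `|ξ| > k_s`, with `γ_p = i√(ξ²-k_p²)`, `γ_s = i√(ξ²-k_s²)`
and `M(ξ)` the DtN symbol, the matrix `-Re M(ξ) = -(M + M̄ᵀ)/2` is a positive
definite Hermitian matrix. -/
theorem stmt5 (lam mu om : ℝ) (hlam : 0 < lam) (hmu : 0 < mu) (hom : 0 < om)
    (kp ks : ℝ) (hkp : kp = om / Real.sqrt (2 * mu + lam)) (hks : ks = om / Real.sqrt mu)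
    (ξ : ℝ) (hξ : ks < |ξ|)
    (γp γs : ℂ)
    (hγp : γp = I * (Real.sqrt (ξ ^ 2 - kp ^ 2) : ℂ))
    (hγs : γs = I * (Real.sqrt (ξ ^ 2 - ks ^ 2) : ℂ))
    (M : Matrix (Fin 2) (Fin 2) ℂ)
    (hM : M = (I / ((ξ : ℂ) ^ 2 + γp * γs)) •
      !![(om : ℂ) ^ 2 * γp, -(ξ : ℂ) * om ^ 2 + (ξ : ℂ) * mu * ((ξ : ℂ) ^ 2 + γp * γs);
         (ξ : ℂ) * om ^ 2 - (ξ : ℂ) * mu * ((ξ : ℂ) ^ 2 + γp * γs), (om : ℂ) ^ 2 * γs]) :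
    ((-(1 / 2 : ℂ)) • (M + Mᴴ)).PosDef := by
  have hks2 : ks ^ 2 = om ^ 2 / mu := by
    rw [hks, div_pow, Real.sq_sqrt hmu.le]
  have hkp2 : kp ^ 2 = om ^ 2 / (2 * mu + lam) := by
    rw [hkp, div_pow, Real.sq_sqrt (by linarith)]
  have hks0 : 0 < ks := by rw [hks]; positivity
  have hkp0 : 0 < kp := by rw [hkp]; positivity
  have hkpks : kp ^ 2 < ks ^ 2 := by
    rw [hkp2, hks2]
    apply div_lt_div_of_pos_left (by positivity) hmu (by linarith)
  have h2kp : 2 * kp ^ 2 < ks ^ 2 := by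
    rw [hkp2, hks2, show 2 * (om ^ 2 / (2 * mu + lam)) = 2 * om ^ 2 / (2 * mu + lam) by ring,
      div_lt_div_iff₀ (by linarith) hmu]
    nlinarith [mul_pos (mul_pos hom hom) hlam]
  have hξ2 : ks ^ 2 < ξ ^ 2 := by
    nlinarith [abs_nonneg ξ, _root_.sq_abs ξ, hks0]
  obtain ⟨a, hadef⟩ : ∃ x : ℝ, Real.sqrt (ξ ^ 2 - kp ^ 2) = x := ⟨_, rfl⟩
  obtain ⟨b, hbdef⟩ : ∃ x : ℝ, Real.sqrt (ξ ^ 2 - ks ^ 2) = x := ⟨_, rfl⟩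
  rw [hadef] at hγp
  rw [hbdef] at hγs
  have ha2 : a ^ 2 = ξ ^ 2 - kp ^ 2 := by rw [← hadef]; exact Real.sq_sqrt (by nlinarith)
  have hb2 : b ^ 2 = ξ ^ 2 - ks ^ 2 := by rw [← hbdef]; exact Real.sq_sqrt (by nlinarith)
  have ha0 : 0 < a := by rw [← hadef]; exact Real.sqrt_pos.mpr (by nlinarith)
  have hb0 : 0 < b := by rw [← hbdef]; exact Real.sqrt_pos.mpr (by nlinarith)
  have key := keylem kp ks ξ a b hkp0 hks0 hkpks h2kp hξ2 ha2 hb2 ha0 hb0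
  obtain ⟨D, hDdef⟩ : ∃ x : ℝ, ξ ^ 2 - a * b = x := ⟨_, rfl⟩
  have hD0 : 0 < D := hDdef ▸ dlem kp ks ξ a b hkp0 hks0 hkpks hξ2 ha2 hb2 ha0 hb0
  have hDne : D ≠ 0 := hD0.ne'
  obtain ⟨p, hpdef⟩ : ∃ x : ℝ, om ^ 2 * a / D = x := ⟨_, rfl⟩
  obtain ⟨q, hqdef⟩ : ∃ x : ℝ, om ^ 2 * b / D = x := ⟨_, rfl⟩
  obtain ⟨er, herdef⟩ : ∃ x : ℝ, ξ * (mu * D - om ^ 2) / D = x := ⟨_, rfl⟩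
  have hp : 0 < p := by rw [← hpdef]; positivity
  have hq : 0 < q := by rw [← hqdef]; positivity
  have homu : om ^ 2 = mu * ks ^ 2 := by rw [hks2]; field_simp
  have hmuD : mu * D - om ^ 2 = -(mu * b * (a - b)) := by
    rw [homu, ← hDdef]; linear_combination (-mu) * hb2
  have hpq : er ^ 2 < p * q := by
    rw [← herdef, ← hpdef, ← hqdef, div_pow, div_mul_div_comm,
      show D * D = D ^ 2 by ring, div_lt_div_iff₀ (by positivity) (by positivity)]
    rw [hmuD]
    have hom4 : om ^ 2 * a * (om ^ 2 * b) = mu ^ 2 * ((ks ^ 2) ^ 2 * a) * b := by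
      rw [homu]; ring
    rw [hom4]
    apply mul_lt_mul_of_pos_right _ (show (0:ℝ) < D ^ 2 by positivity)
    nlinarith [mul_lt_mul_of_pos_left key (show (0:ℝ) < mu ^ 2 * b by positivity)]
  -- complex computation
  have hDc : ((ξ : ℂ) ^ 2 + γp * γs) = (D : ℂ) := by
    rw [hγp, hγs, ← hDdef]
    push_cast
    linear_combination ((a : ℂ) * b) * Complex.I_sq
  have hMN : (-(1 / 2 : ℂ)) • (M + Mᴴ) = !![(p : ℂ), -(I * er); I * er, (q : ℂ)] := by
    subst hM
    rw [hDc, hγp, hγs]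
    have hDcne : (D : ℂ) ≠ 0 := by exact_mod_cast hDne
    ext i j
    fin_cases i <;> fin_cases j <;>
      · simp only [Matrix.conjTranspose_apply, Matrix.smul_apply, Matrix.add_apply,
          Matrix.cons_val', Matrix.cons_val_zero, Matrix.cons_val_one, Matrix.head_cons,
          Matrix.head_fin_const, Matrix.empty_val', Matrix.cons_val_fin_one,
          Matrix.of_apply, smul_eq_mul, star_mul', star_div₀, Complex.star_def,
          Complex.conj_I, _root_.map_pow, _root_.map_mul, _root_.map_add, map_sub, map_neg, _root_.map_ofNat,
          Complex.conj_ofReal]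
        rw [← hpdef, ← hqdef, ← herdef]
        push_cast
        field_simp
        ring_nf
        all_goals simp (failIfUnchanged := false) only [map_mul, map_add, map_sub, map_neg,
          Complex.conj_I, Complex.conj_ofReal, map_pow]
        all_goals ring_nf
        all_goals simp (failIfUnchanged := false) only [Complex.I_sq]
        all_goals ring
  rw [hMN]
  exact posdef_fin_two p q er hp hq hpq
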